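/- Let M > 0, N_S ≥ 0 and γ > 0 be real, and set N = M·N_S. Then (2N + M)/(γ·((2·N_S + 1)·γ + 1)) ≤ 2N/(γ·(γ+1)²) + M/(γ·(γ+1)). That is, the QFI of M iid two-mode squeezed vacuum probes of per-mode brightness N_S for sensing the noise level γ of an additive-noise channel never exceeds the paper's universal upper bound, with equality when N_S = 0. -/

import Mathlib

/-- The QFI of `M` iid two-mode squeezed vacuum probes of per-mode brightness `N_S`
(total signal energy `N = M N_S`) for sensing the noise level `γ` of an additive-noise
channel never exceeds the paper's universal upper bound, with equality when `N_S = 0`. -/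
theorem stmt_18 (M NS γ : ℝ) (hM : 0 < M) (hNS : 0 ≤ NS) (hγ : 0 < γ)
    (N : ℝ) (hN : N = M * NS) :
    (2 * N + M) / (γ * ((2 * NS + 1) * γ + 1))
      ≤ 2 * N / (γ * (γ + 1) ^ 2) + M / (γ * (γ + 1)) ∧
    (NS = 0 →
      (2 * N + M) / (γ * ((2 * NS + 1) * γ + 1))
        = 2 * N / (γ * (γ + 1) ^ 2) + M / (γ * (γ + 1))) := by
  subst hN
  have h1 : (0:ℝ) < γ * ((2 * NS + 1) * γ + 1) := by positivity
  have h2 : (0:ℝ) < γ * (γ + 1) ^ 2 := by positivity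
  have h3 : (0:ℝ) < γ * (γ + 1) := by positivity
  constructor
  · rw [div_add_div _ _ (ne_of_gt h2) (ne_of_gt h3), div_le_div_iff₀ h1 (by positivity)]
    nlinarith [mul_nonneg (mul_nonneg (mul_nonneg hM.le (sq_nonneg NS)) (pow_pos hγ 3).le) (by positivity : (0:ℝ) ≤ γ + 1)]
  · intro h; subst h; field_simp; ring
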